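/- Let λ > 0, a₁ ≥ 0, t₀ > 0, let g : ℝ → ℝ be a nonnegative continuous function, and let y : ℝ → ℝ be a nonnegative function, differentiable on [t₀, ∞), satisfying y'(t) + λ·y(t) ≤ g(t) for all t ≥ t₀ and ∫_{t}^{t+1} g(s) ds ≤ a₁ for all t ≥ t₀. Then for all t ≥ t₀, y(t) ≤ e^{−λ(t − t₀)}·y(t₀) + a₁·e^{2λ}/(e^{λ} − 1). -/

import Mathlib

open Set intervalIntegral

lemma gronwall_step (lam a₁ t₀ : ℝ)
    (hlam : 0 < lam) (g y y' : ℝ → ℝ) (hg : Continuous g)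
    (hg0 : ∀ t, 0 ≤ g t)
    (hy : ∀ t ∈ Set.Ici t₀, HasDerivWithinAt y (y' t) (Set.Ici t₀) t)
    (hineq : ∀ t ∈ Set.Ici t₀, y' t + lam * y t ≤ g t)
    (hgint : ∀ t ∈ Set.Ici t₀, (∫ s in t..(t + 1), g s) ≤ a₁)
    (s t : ℝ) (hs : t₀ ≤ s) (hst : s ≤ t) (hts : t ≤ s + 1) :
    y t ≤ Real.exp (-lam * (t - s)) * y s + a₁ := by
  set h : ℝ → ℝ := fun u => Real.exp (lam * (u - s)) * g u with hh
  have hhc : Continuous h := by continuity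
  set F : ℝ → ℝ := fun u => Real.exp (lam * (u - s)) * y u with hF
  set G : ℝ → ℝ := fun u => (∫ v in s..u, h v) - F u with hG
  -- derivative of F within Ici t₀
  have hFd : ∀ u ∈ Set.Ici t₀,
      HasDerivWithinAt F (Real.exp (lam * (u - s)) * (y' u + lam * y u)) (Set.Ici t₀) u := by
    intro u hu
    have hexp : HasDerivAt (fun u => Real.exp (lam * (u - s)))
        (lam * Real.exp (lam * (u - s))) u := by
      have h1 : HasDerivAt (fun u : ℝ => lam * (u - s)) lam u := by
        simpa using ((hasDerivAt_id u).sub_const s).const_mul lam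
      simpa [mul_comm] using h1.exp
    have := hexp.hasDerivWithinAt.fun_mul (hy u hu)
    refine this.congr_deriv ?_
    ring
  -- derivative of the integral part
  have hId : ∀ u : ℝ, HasDerivAt (fun u => ∫ v in s..u, h v) (h u) u := fun u =>
    intervalIntegral.integral_hasDerivAt_right (hhc.intervalIntegrable s u)
      (hhc.stronglyMeasurableAtFilter _ _) hhc.continuousAt
  -- G is monotone on Ici t₀
  have hmono : MonotoneOn G (Set.Ici t₀) := by
    apply monotoneOn_of_hasDerivWithinAt_nonneg (convex_Ici t₀)
      (f' := fun u => h u - Real.exp (lam * (u - s)) * (y' u + lam * y u))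
    · intro u hu
      exact ((hId u).continuousAt.continuousWithinAt.sub (hFd u hu).continuousWithinAt)
    · intro u hu
      rw [interior_Ici] at hu ⊢
      exact ((hId u).hasDerivWithinAt.sub ((hFd u (Set.mem_Ici.2 (le_of_lt hu))).mono Ioi_subset_Ici_self))
    · intro u hu
      rw [interior_Ici] at hu
      have := hineq u (Set.mem_Ici.2 (le_of_lt hu))
      have he : 0 < Real.exp (lam * (u - s)) := Real.exp_pos _
      have : Real.exp (lam * (u - s)) * (y' u + lam * y u) ≤ h u := by
        exact mul_le_mul_of_nonneg_left this he.le
      linarith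
  have hGs : G s = - y s := by simp [hG, hF]
  have key : G s ≤ G t := hmono hs (hs.trans hst) hst
  -- bound the integral
  have hint1 : (∫ v in s..t, h v) ≤ Real.exp (lam * (t - s)) * ∫ v in s..t, g v := by
    rw [← intervalIntegral.integral_const_mul]
    apply intervalIntegral.integral_mono_on hst (hhc.intervalIntegrable s t)
      ((continuous_const.mul hg).intervalIntegrable s t)
    intro v hv
    exact mul_le_mul_of_nonneg_right
      (Real.exp_le_exp.2 (by nlinarith [hv.2, hlam])) (hg0 v)
  have hint2 : (∫ v in s..t, g v) ≤ a₁ := by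
    have hsplit : (∫ v in s..t, g v) + (∫ v in t..(s+1), g v) = ∫ v in s..(s+1), g v :=
      intervalIntegral.integral_add_adjacent_intervals (hg.intervalIntegrable _ _)
        (hg.intervalIntegrable _ _)
    have hnn : 0 ≤ ∫ v in t..(s+1), g v :=
      intervalIntegral.integral_nonneg hts (fun u _ => hg0 u)
    have := hgint s hs
    linarith
  have hFt : F t ≤ y s + Real.exp (lam * (t - s)) * a₁ := by
    have h1 : (∫ v in s..t, h v) - F t ≥ - y s := by rw [← hGs]; exact key
    have h2 : (∫ v in s..t, h v) ≤ Real.exp (lam * (t - s)) * a₁ :=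
      hint1.trans (mul_le_mul_of_nonneg_left hint2 (Real.exp_pos _).le)
    linarith
  -- conclude
  have hepos : 0 < Real.exp (lam * (t - s)) := Real.exp_pos _
  have hymul : y t = Real.exp (-lam * (t - s)) * F t := by
    simp only [hF]
    rw [← mul_assoc, ← Real.exp_add]
    ring_nf
    simp
  rw [hymul]
  have : Real.exp (-lam * (t - s)) * F t ≤
      Real.exp (-lam * (t - s)) * (y s + Real.exp (lam * (t - s)) * a₁) :=
    mul_le_mul_of_nonneg_left hFt (Real.exp_pos _).le
  refine this.trans ?_
  rw [mul_add, ← mul_assoc, ← Real.exp_add]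
  ring_nf
  simp

lemma gronwall_induction (lam a₁ t₀ : ℝ)
    (hlam : 0 < lam) (ha₁ : 0 ≤ a₁) (g y y' : ℝ → ℝ) (hg : Continuous g)
    (hg0 : ∀ t, 0 ≤ g t)
    (hy : ∀ t ∈ Set.Ici t₀, HasDerivWithinAt y (y' t) (Set.Ici t₀) t)
    (hineq : ∀ t ∈ Set.Ici t₀, y' t + lam * y t ≤ g t)
    (hgint : ∀ t ∈ Set.Ici t₀, (∫ s in t..(t + 1), g s) ≤ a₁) :
    ∀ n : ℕ, ∀ t, t₀ ≤ t → t ≤ t₀ + n →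
      y t ≤ Real.exp (-lam * (t - t₀)) * y t₀ + a₁ * Real.exp lam / (Real.exp lam - 1) := by
  have hexp1 : (1 : ℝ) < Real.exp lam := by
    rw [← Real.exp_zero]; exact Real.exp_lt_exp.2 hlam
  have hden : 0 < Real.exp lam - 1 := by linarith
  set C := a₁ * Real.exp lam / (Real.exp lam - 1) with hC
  have hC0 : 0 ≤ C := div_nonneg (mul_nonneg ha₁ (Real.exp_pos _).le) hden.le
  have ha₁C : a₁ ≤ C := by
    rw [hC, le_div_iff₀ hden]; nlinarith
  have hCrec : Real.exp (-lam) * C + a₁ = C := by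
    have he : Real.exp (-lam) * Real.exp lam = 1 := by
      rw [← Real.exp_add]; simp
    rw [hC]
    field_simp
    nlinarith [he]
  intro n
  induction n with
  | zero =>
    intro t ht1 ht2
    have : t = t₀ := le_antisymm (by simpa using ht2) ht1
    subst this
    simp only [sub_self, mul_zero, Real.exp_zero, one_mul]
    linarith
  | succ n ih =>
    intro t ht1 ht2
    by_cases hcase : t ≤ t₀ + n
    · exact ih t ht1 hcase
    push_neg at hcase
    by_cases hone : t - 1 < t₀
    · -- single step from t₀
      have hstep := gronwall_step lam a₁ t₀ hlam g y y' hg hg0 hy hineq hgint t₀ t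
        le_rfl ht1 (by linarith)
      calc y t ≤ Real.exp (-lam * (t - t₀)) * y t₀ + a₁ := hstep
        _ ≤ Real.exp (-lam * (t - t₀)) * y t₀ + C := by linarith
    · push_neg at hone
      have hstep := gronwall_step lam a₁ t₀ hlam g y y' hg hg0 hy hineq hgint (t - 1) t
        hone (by linarith) (by linarith)
      have hih := ih (t - 1) hone (by push_cast; push_cast at ht2; linarith)
      have h1 : y t ≤ Real.exp (-lam * (t - (t - 1))) *
          (Real.exp (-lam * (t - 1 - t₀)) * y t₀ + C) + a₁ := by
        refine hstep.trans ?_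
        have := mul_le_mul_of_nonneg_left hih (Real.exp_pos (-lam * (t - (t-1)))).le
        linarith
      have h2 : Real.exp (-lam * (t - (t - 1))) *
          (Real.exp (-lam * (t - 1 - t₀)) * y t₀ + C) + a₁
          = Real.exp (-lam * (t - t₀)) * y t₀ + (Real.exp (-lam) * C + a₁) := by
        rw [mul_add, ← mul_assoc, ← Real.exp_add]
        ring_nf
      rw [h2, hCrec] at h1
      exact h1

/-- Explicit quantitative bound in the variant uniform Gronwall lemma. -/
theorem uniform_gronwall_variant_explicit (lam a₁ t₀ : ℝ)
    (hlam : 0 < lam) (ha₁ : 0 ≤ a₁) (ht₀ : 0 < t₀)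
    (g y y' : ℝ → ℝ) (hg : Continuous g)
    (hg0 : ∀ t, 0 ≤ g t) (hy0 : ∀ t, 0 ≤ y t)
    (hy : ∀ t ∈ Set.Ici t₀, HasDerivWithinAt y (y' t) (Set.Ici t₀) t)
    (hineq : ∀ t ∈ Set.Ici t₀, y' t + lam * y t ≤ g t)
    (hgint : ∀ t ∈ Set.Ici t₀, (∫ s in t..(t + 1), g s) ≤ a₁) :
    ∀ t ∈ Set.Ici t₀,
      y t ≤ Real.exp (-lam * (t - t₀)) * y t₀
        + a₁ * Real.exp (2 * lam) / (Real.exp lam - 1) := by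
  intro t ht
  have ht : t₀ ≤ t := ht
  have hexp1 : (1 : ℝ) < Real.exp lam := by
    rw [← Real.exp_zero]; exact Real.exp_lt_exp.2 hlam
  have hden : 0 < Real.exp lam - 1 := by linarith
  have hn : t ≤ t₀ + (⌈t - t₀⌉₊ : ℕ) := by
    have := Nat.le_ceil (t - t₀)
    push_cast at this ⊢
    linarith
  have hmain := gronwall_induction lam a₁ t₀ hlam ha₁ g y y' hg hg0 hy hineq hgint
    ⌈t - t₀⌉₊ t ht hn
  refine hmain.trans ?_
  have h2 : a₁ * Real.exp lam ≤ a₁ * Real.exp (2 * lam) :=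
    mul_le_mul_of_nonneg_left (Real.exp_le_exp.2 (by linarith)) ha₁
  have h3 := (div_le_div_iff_of_pos_right hden).2 h2
  linarith
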